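/- arXiv:cs/0506104 — 2 statements merged into one kernel-verified Lean document; each statement's English description precedes it below -/
import Mathlib

section
/- Let t ≥ 2 and k ≥ 1 be integers, let X_1, …, X_k be pairwise disjoint sets of atoms, each of cardinality 2t − 1, and let F_{t,k} be the union over i = 1, …, k of the theories E_{t,X_i}, where E_{t,X} denotes the CNF theory of all clauses of t pairwise distinct (positive) atoms of X. Then F_{t,k} has exactly k(2t−1) atoms, exactly C(2t−1, t)^k minimal models, and every minimal model of F_{t,k} has exactly kt elements. -/
open Classical

/-- A literal: `(true, a)` is the atom `a`, `(false, a)` is the negated atom `¬ a`. -/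
abbrev Lit : Type := Bool × ℕ

/-- A clause: a finite set of literals, viewed as the disjunction of its literals. -/
abbrev Clause : Type := Finset Lit

/-- A CNF theory: a finite set of clauses. -/
abbrev CTheory : Type := Finset Clause

/-- A clause is proper: it contains no atom together with its negation. -/
def Clause.ok (c : Clause) : Prop :=
  ∀ a : ℕ, ¬ (((true, a) : Lit) ∈ c ∧ ((false, a) : Lit) ∈ c)

/-- The set of atoms occurring in a clause. -/
def clauseAtoms (c : Clause) : Finset ℕ := c.image Prod.snd

/-- `At(T)`: the set of atoms occurring in a CNF theory. -/
def thAtoms (T : CTheory) : Finset ℕ := T.sup clauseAtoms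

/-- A set of atoms `M` satisfies a literal `l`. -/
def satLit (M : Finset ℕ) (l : Lit) : Prop := if l.1 then l.2 ∈ M else l.2 ∉ M

/-- `M` is a model of the CNF theory `T`. -/
def isModel (M : Finset ℕ) (T : CTheory) : Prop := ∀ c ∈ T, ∃ l ∈ c, satLit M l

/-- `M` is a minimal model of `T`: a model `M ⊆ At(T)` no proper subset of which is a model. -/
def isMinModel (M : Finset ℕ) (T : CTheory) : Prop :=
  isModel M T ∧ M ⊆ thAtoms T ∧ ∀ M' : Finset ℕ, M' ⊂ M → ¬ isModel M' T

/-- `E_{t,X}`: the CNF theory of all clauses consisting of `t` pairwise distinct (positive)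
atoms of `X`. -/
def Eth (t : ℕ) (X : Finset ℕ) : CTheory :=
  (X.powersetCard t).image (fun s => s.image (fun a => ((true, a) : Lit)))

lemma thAtoms_Eth (t : ℕ) (X : Finset ℕ) (ht : 1 ≤ t) (htX : t ≤ X.card) :
    thAtoms (Eth t X) = X := by
  ext a
  simp only [thAtoms, Finset.mem_sup, Eth, Finset.mem_image, Finset.mem_powersetCard]
  constructor
  · rintro ⟨c, ⟨s, ⟨hsX, hst⟩, rfl⟩, hac⟩
    simp only [clauseAtoms, Finset.image_image, Function.comp] at hac
    simp only [Finset.mem_image] at hac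
    obtain ⟨b, hb, rfl⟩ := hac
    exact hsX hb
  · intro haX
    obtain ⟨u, hu1, hu2, hu3⟩ := Finset.exists_subsuperset_card_eq
      (Finset.singleton_subset_iff.mpr haX) (by simpa using ht) htX
    refine ⟨u.image (fun a => ((true, a) : Lit)), ⟨u, ⟨hu2, hu3⟩, rfl⟩, ?_⟩
    simp only [clauseAtoms, Finset.image_image, Function.comp, Finset.mem_image]
    exact ⟨a, hu1 (Finset.mem_singleton_self a), rfl⟩

lemma isModel_Eth (t : ℕ) (X M : Finset ℕ) :
    isModel M (Eth t X) ↔ (X \ M).card < t := by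
  constructor
  · intro h
    by_contra hc
    push_neg at hc
    obtain ⟨u, hu1, hu2⟩ := Finset.exists_subset_card_eq hc
    obtain ⟨l, hl, hsat⟩ := h (u.image (fun a => ((true, a) : Lit)))
      (Finset.mem_image.mpr ⟨u, Finset.mem_powersetCard.mpr
        ⟨hu1.trans (Finset.sdiff_subset), hu2⟩, rfl⟩)
    obtain ⟨b, hb, rfl⟩ := Finset.mem_image.mp hl
    simp only [satLit, if_pos] at hsat
    exact (Finset.mem_sdiff.mp (hu1 hb)).2 hsat
  · intro h c hc
    obtain ⟨s, hs, rfl⟩ := Finset.mem_image.mp hc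
    obtain ⟨hsX, hst⟩ := Finset.mem_powersetCard.mp hs
    by_contra hno
    push_neg at hno
    have hsub : s ⊆ X \ M := by
      intro b hb
      refine Finset.mem_sdiff.mpr ⟨hsX hb, fun hbM => ?_⟩
      exact hno (true, b) (Finset.mem_image_of_mem _ hb) (by simp [satLit, hbM])
    exact absurd (Finset.card_le_card hsub) (by omega)

lemma isModel_biUnion {k : ℕ} (M : Finset ℕ) (T : Fin k → CTheory) :
    isModel M (Finset.univ.biUnion T) ↔ ∀ i, isModel M (T i) := by
  constructor
  · intro h i c hc
    exact h c (Finset.mem_biUnion.mpr ⟨i, Finset.mem_univ i, hc⟩)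
  · intro h c hc
    obtain ⟨i, _, hci⟩ := Finset.mem_biUnion.mp hc
    exact h i c hci

lemma thAtoms_F (t k : ℕ) (ht : 1 ≤ t) (X : Fin k → Finset ℕ)
    (hcard : ∀ i, t ≤ (X i).card) :
    thAtoms (Finset.univ.biUnion fun i => Eth t (X i)) = Finset.univ.biUnion X := by
  rw [thAtoms, Finset.sup_biUnion]
  have : ∀ i : Fin k, (Eth t (X i)).sup clauseAtoms = X i := by
    intro i; exact thAtoms_Eth t (X i) ht (hcard i)
  rw [Finset.sup_congr rfl (fun i _ => this i), ← Finset.sup_eq_biUnion]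

lemma card_inter_of_card_sdiff {X M : Finset ℕ} :
    (X ∩ M).card + (X \ M).card = X.card := Finset.card_inter_add_card_sdiff X M

lemma minModel_char (t k : ℕ) (ht : 2 ≤ t)
    (X : Fin k → Finset ℕ) (hcard : ∀ i, (X i).card = 2 * t - 1)
    (hdisj : ∀ i j, i ≠ j → Disjoint (X i) (X j))
    (M : Finset ℕ) :
    isMinModel M (Finset.univ.biUnion (fun i => Eth t (X i))) ↔
      (M ⊆ Finset.univ.biUnion X ∧ ∀ i, (M ∩ X i).card = t) := by
  have htX : ∀ i, t ≤ (X i).card := fun i => by rw [hcard i]; omega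
  have hAt := thAtoms_F t k (by omega) X htX
  constructor
  · rintro ⟨hmod, hsub, hmin⟩
    rw [hAt] at hsub
    refine ⟨hsub, fun i => ?_⟩
    have h1 : ∀ j, (X j \ M).card < t := fun j =>
      (isModel_Eth t (X j) M).mp ((isModel_biUnion M _).mp hmod j)
    have h2 : t ≤ (M ∩ X i).card := by
      have := card_inter_of_card_sdiff (X := X i) (M := M)
      have := h1 i
      rw [Finset.inter_comm]
      have := hcard i
      omega
    by_contra hne
    have hgt : t < (M ∩ X i).card := lt_of_le_of_ne h2 (Ne.symm hne)
    obtain ⟨a, ha⟩ : (M ∩ X i).Nonempty := Finset.card_pos.mp (by omega)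
    obtain ⟨haM, haX⟩ := Finset.mem_inter.mp ha
    refine hmin (M.erase a) (Finset.erase_ssubset haM) ?_
    rw [isModel_biUnion]
    intro j
    rw [isModel_Eth]
    by_cases hji : j = i
    · subst hji
      have hsub2 : X j \ M.erase a ⊆ insert a (X j \ M) := by
        intro b hb
        obtain ⟨hbX, hbM⟩ := Finset.mem_sdiff.mp hb
        by_cases hba : b = a
        · simp [hba]
        · exact Finset.mem_insert_of_mem (Finset.mem_sdiff.mpr
            ⟨hbX, fun h => hbM (Finset.mem_erase.mpr ⟨hba, h⟩)⟩)
      have := Finset.card_le_card hsub2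
      have hc1 := Finset.card_insert_le a (X j \ M)
      have := card_inter_of_card_sdiff (X := X j) (M := M)
      have h3 : (M ∩ X j).card = (X j ∩ M).card := by rw [Finset.inter_comm]
      have := hcard j
      omega
    · have : X j \ M.erase a = X j \ M := by
        ext b
        simp only [Finset.mem_sdiff, Finset.mem_erase]
        constructor
        · rintro ⟨hbX, hbM⟩
          refine ⟨hbX, fun h => hbM ⟨fun hba => ?_, h⟩⟩
          subst hba
          exact absurd ((hdisj j i hji).le_bot (Finset.mem_inter.mpr ⟨hbX, haX⟩)) (Finset.notMem_empty b)
        · rintro ⟨hbX, hbM⟩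
          exact ⟨hbX, fun h => hbM h.2⟩
      rw [this]; exact h1 j
  · rintro ⟨hsub, hinter⟩
    have hsd : ∀ i, (X i \ M).card < t := by
      intro i
      have := card_inter_of_card_sdiff (X := X i) (M := M)
      have h3 : (M ∩ X i).card = (X i ∩ M).card := by rw [Finset.inter_comm]
      have := hcard i; have := hinter i
      omega
    refine ⟨(isModel_biUnion M _).mpr (fun i => (isModel_Eth t (X i) M).mpr (hsd i)),
      hAt ▸ hsub, ?_⟩
    intro M' hM' hmod'
    obtain ⟨a, haM, haM'⟩ := Finset.exists_of_ssubset hM'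
    obtain ⟨i, _, haX⟩ := Finset.mem_biUnion.mp (hsub haM)
    have h1 : (X i \ M').card < t := (isModel_Eth t (X i) M').mp
      ((isModel_biUnion M' _).mp hmod' i)
    have hsub2 : insert a (X i \ M) ⊆ X i \ M' := by
      intro b hb
      rcases Finset.mem_insert.mp hb with rfl | hb
      · exact Finset.mem_sdiff.mpr ⟨haX, haM'⟩
      · obtain ⟨hbX, hbM⟩ := Finset.mem_sdiff.mp hb
        exact Finset.mem_sdiff.mpr ⟨hbX, fun h => hbM (hM'.subset h)⟩
    have hnotmem : a ∉ X i \ M := fun h => (Finset.mem_sdiff.mp h).2 haM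
    have := Finset.card_le_card hsub2
    rw [Finset.card_insert_of_notMem hnotmem] at this
    have := card_inter_of_card_sdiff (X := X i) (M := M)
    have h3 : (M ∩ X i).card = (X i ∩ M).card := by rw [Finset.inter_comm]
    have := hcard i; have := hinter i
    omega

/-- Let `t ≥ 2`, `k ≥ 1`, and let `X_1, …, X_k` be pairwise disjoint sets of atoms of
cardinality `2t − 1` each. Then `F_{t,k} = ⋃ᵢ E_{t,X_i}` has exactly `k(2t−1)` atoms, exactly
`C(2t−1, t)^k` minimal models, and every minimal model of `F_{t,k}` has exactly `kt`
elements. -/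
theorem F_tk_minimal_models (t k : ℕ) (ht : 2 ≤ t) (hk : 1 ≤ k)
    (X : Fin k → Finset ℕ) (hcard : ∀ i, (X i).card = 2 * t - 1)
    (hdisj : ∀ i j, i ≠ j → Disjoint (X i) (X j))
    (F : CTheory) (hF : F = Finset.univ.biUnion (fun i => Eth t (X i))) :
    (thAtoms F).card = k * (2 * t - 1) ∧
    ((thAtoms F).powerset.filter (fun M => isMinModel M F)).card =
      (Nat.choose (2 * t - 1) t) ^ k ∧
    ∀ M : Finset ℕ, isMinModel M F → M.card = k * t := by
  subst hF
  have htX : ∀ i, t ≤ (X i).card := fun i => by rw [hcard i]; omega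
  have hAt := thAtoms_F t k (by omega) X htX
  have hchar := minModel_char t k ht X hcard hdisj
  refine ⟨?_, ?_, ?_⟩
  · rw [hAt, Finset.card_biUnion (fun i _ j _ h => hdisj i j h)]
    simp [hcard, Finset.sum_const, Finset.card_univ, mul_comm]
  · have hmem : ∀ M : Finset ℕ,
        M ∈ (thAtoms (Finset.univ.biUnion fun i => Eth t (X i))).powerset.filter
          (fun M => isMinModel M (Finset.univ.biUnion fun i => Eth t (X i))) ↔
        isMinModel M (Finset.univ.biUnion fun i => Eth t (X i)) := by
      intro M
      simp only [Finset.mem_filter, Finset.mem_powerset]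
      exact ⟨fun h => h.2, fun h => ⟨h.2.1, h⟩⟩
    rw [Finset.card_bij' (i := fun M _ => fun i : Fin k => M ∩ X i)
      (j := fun f _ => Finset.univ.biUnion f)
      (hi := ?_) (hj := ?_) (left_inv := ?_) (right_inv := ?_)
      (t := Fintype.piFinset (fun i => (X i).powersetCard t))]
    · rw [Fintype.card_piFinset]
      simp [Finset.card_powersetCard, hcard]
    · intro M hM
      obtain ⟨hsub, hint⟩ := (hchar M).mp ((hmem M).mp hM)
      rw [Fintype.mem_piFinset]
      intro i
      exact Finset.mem_powersetCard.mpr ⟨Finset.inter_subset_right, hint i⟩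
    · intro f hf
      rw [Fintype.mem_piFinset] at hf
      have hfX : ∀ i, f i ⊆ X i := fun i => (Finset.mem_powersetCard.mp (hf i)).1
      have hfc : ∀ i, (f i).card = t := fun i => (Finset.mem_powersetCard.mp (hf i)).2
      have hinter : ∀ i, (Finset.univ.biUnion f) ∩ X i = f i := by
        intro i
        ext x
        simp only [Finset.mem_inter, Finset.mem_biUnion, Finset.mem_univ, true_and]
        constructor
        · rintro ⟨⟨j, hxj⟩, hxi⟩
          by_cases hji : j = i
          · exact hji ▸ hxj
          · exact absurd ((hdisj j i hji).le_bot
              (Finset.mem_inter.mpr ⟨hfX j hxj, hxi⟩)) (Finset.notMem_empty x)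
        · intro hx
          exact ⟨⟨i, hx⟩, hfX i hx⟩
      refine (hmem _).mpr ((hchar _).mpr ⟨?_, fun i => by rw [hinter i, hfc i]⟩)
      exact Finset.biUnion_subset_biUnion_of_subset_left _ (fun i hi => hi) |>.trans
        (Finset.biUnion_mono (fun i _ => hfX i))
    · intro M hM
      obtain ⟨hsub, _⟩ := (hchar M).mp ((hmem M).mp hM)
      ext x
      simp only [Finset.mem_biUnion, Finset.mem_inter, Finset.mem_univ, true_and]
      constructor
      · rintro ⟨i, hx, _⟩; exact hx
      · intro hx
        obtain ⟨i, _, hxi⟩ := Finset.mem_biUnion.mp (hsub hx)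
        exact ⟨i, hx, hxi⟩
    · intro f hf
      rw [Fintype.mem_piFinset] at hf
      have hfX : ∀ i, f i ⊆ X i := fun i => (Finset.mem_powersetCard.mp (hf i)).1
      funext i
      ext x
      simp only [Finset.mem_inter, Finset.mem_biUnion, Finset.mem_univ, true_and]
      constructor
      · rintro ⟨⟨j, hxj⟩, hxi⟩
        by_cases hji : j = i
        · exact hji ▸ hxj
        · exact absurd ((hdisj j i hji).le_bot
            (Finset.mem_inter.mpr ⟨hfX j hxj, hxi⟩)) (Finset.notMem_empty x)
      · intro hx
        exact ⟨⟨i, hx⟩, hfX i hx⟩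
  · intro M hM
    obtain ⟨hsub, hint⟩ := (hchar M).mp hM
    have hMeq : M = Finset.univ.biUnion (fun i => M ∩ X i) := by
      ext x
      simp only [Finset.mem_biUnion, Finset.mem_inter, Finset.mem_univ, true_and]
      constructor
      · intro hx
        obtain ⟨i, _, hxi⟩ := Finset.mem_biUnion.mp (hsub hx)
        exact ⟨i, hx, hxi⟩
      · rintro ⟨i, hx, _⟩; exact hx
    rw [hMeq, Finset.card_biUnion]
    · simp [hint, mul_comm]
    · intro i _ j _ hij
      exact (hdisj i j hij).mono Finset.inter_subset_right Finset.inter_subset_right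
end

section
/- For every positive integer k there exists a 2-CNF theory T with exactly n = 3k atoms that has exactly 3^k = 3^(n/3) minimal models; hence the upper bound 3^(n/3) on the number of minimal models of a 2-CNF theory with n atoms is attained. -/
open Classical

def cl2 (a b : ℕ) : Clause := {(true, a), (true, b)}

def blk (i : ℕ) : Finset Clause :=
  {cl2 (3*i) (3*i+1), cl2 (3*i+1) (3*i+2), cl2 (3*i) (3*i+2)}

def Tk (k : ℕ) : CTheory := (Finset.range k).biUnion blk

lemma mem_Tk {c : Clause} {k : ℕ} : c ∈ Tk k ↔
    ∃ i < k, c = cl2 (3*i) (3*i+1) ∨ c = cl2 (3*i+1) (3*i+2) ∨ c = cl2 (3*i) (3*i+2) := by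
  simp [Tk, blk, Finset.mem_biUnion]

lemma sat_cl2 {M : Finset ℕ} {a b : ℕ} : (∃ l ∈ cl2 a b, satLit M l) ↔ a ∈ M ∨ b ∈ M := by
  simp [cl2, satLit]

lemma clauseAtoms_cl2 (a b : ℕ) : clauseAtoms (cl2 a b) = {a, b} := by
  simp [clauseAtoms, cl2]

lemma thAtoms_Tk (k : ℕ) : thAtoms (Tk k) = Finset.range (3*k) := by
  ext a
  simp only [thAtoms, Finset.mem_sup, mem_Tk, Finset.mem_range]
  constructor
  · rintro ⟨c, ⟨i, hi, rfl | rfl | rfl⟩, ha⟩ <;>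
      simp [clauseAtoms_cl2] at ha <;> omega
  · intro h
    by_cases h1 : a % 3 = 2
    · exact ⟨cl2 (3*(a/3)) (3*(a/3)+2), ⟨a/3, by omega, Or.inr (Or.inr rfl)⟩,
        by rw [clauseAtoms_cl2]; simp; omega⟩
    · exact ⟨cl2 (3*(a/3)) (3*(a/3)+1), ⟨a/3, by omega, Or.inl rfl⟩,
        by rw [clauseAtoms_cl2]; simp; omega⟩

lemma model_iff {M : Finset ℕ} {k : ℕ} : isModel M (Tk k) ↔
    ∀ i < k, (3*i ∈ M ∨ 3*i+1 ∈ M) ∧ (3*i+1 ∈ M ∨ 3*i+2 ∈ M) ∧ (3*i ∈ M ∨ 3*i+2 ∈ M) := by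
  simp only [isModel, mem_Tk]
  constructor
  · intro h i hi
    exact ⟨sat_cl2.mp (h _ ⟨i, hi, Or.inl rfl⟩),
      sat_cl2.mp (h _ ⟨i, hi, Or.inr (Or.inl rfl)⟩),
      sat_cl2.mp (h _ ⟨i, hi, Or.inr (Or.inr rfl)⟩)⟩
  · rintro h c ⟨i, hi, rfl | rfl | rfl⟩ <;> rw [sat_cl2]
    exacts [(h i hi).1, (h i hi).2.1, (h i hi).2.2]

def good (k : ℕ) (M : Finset ℕ) : Prop :=
  M ⊆ Finset.range (3*k) ∧ ∀ i < k,
    (3*i ∈ M ∧ 3*i+1 ∈ M ∧ 3*i+2 ∉ M) ∨ (3*i ∈ M ∧ 3*i+1 ∉ M ∧ 3*i+2 ∈ M) ∨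
    (3*i ∉ M ∧ 3*i+1 ∈ M ∧ 3*i+2 ∈ M)

lemma minmodel_iff {M : Finset ℕ} {k : ℕ} : isMinModel M (Tk k) ↔ good k M := by
  constructor
  · rintro ⟨hm, hsub, hmin⟩
    rw [thAtoms_Tk] at hsub
    refine ⟨hsub, fun i hi => ?_⟩
    have h := model_iff.mp hm i hi
    by_contra hbad
    have h0 : 3*i ∈ M ∧ 3*i+1 ∈ M ∧ 3*i+2 ∈ M := by tauto
    apply hmin (M.erase (3*i+2)) (Finset.erase_ssubset h0.2.2)
    rw [model_iff]
    intro i' hi'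
    have hmem : ∀ a, a ∈ M → a ≠ 3*i+2 → a ∈ M.erase (3*i+2) :=
      fun a ha hne => Finset.mem_erase.mpr ⟨hne, ha⟩
    by_cases hii : i' = i
    · subst hii
      exact ⟨Or.inl (hmem _ h0.1 (by omega)), Or.inl (hmem _ h0.2.1 (by omega)),
        Or.inl (hmem _ h0.1 (by omega))⟩
    · obtain ⟨h1, h2, h3⟩ := model_iff.mp hm i' hi'
      exact ⟨h1.imp (fun h => hmem _ h (by omega)) (fun h => hmem _ h (by omega)),
        h2.imp (fun h => hmem _ h (by omega)) (fun h => hmem _ h (by omega)),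
        h3.imp (fun h => hmem _ h (by omega)) (fun h => hmem _ h (by omega))⟩
  · rintro ⟨hsub, hblk⟩
    refine ⟨model_iff.mpr (fun i hi => by have := hblk i hi; tauto),
      by rw [thAtoms_Tk]; exact hsub, ?_⟩
    intro M' hM' hmod
    have hsub' : M' ⊆ M := hM'.subset
    obtain ⟨x, hxM, hxM'⟩ := Finset.exists_of_ssubset hM'
    have hx3 : x < 3*k := by have := hsub hxM; simp at this; omega
    obtain ⟨i, hi, hxcase⟩ : ∃ i, i < k ∧ (x = 3*i ∨ x = 3*i+1 ∨ x = 3*i+2) :=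
      ⟨x/3, by omega, by omega⟩
    have hD := hblk i hi
    have hmm := model_iff.mp hmod i hi
    have hA : 3*i ∉ M → 3*i ∉ M' := fun h hm => h (hsub' hm)
    have hB : 3*i+1 ∉ M → 3*i+1 ∉ M' := fun h hm => h (hsub' hm)
    have hC : 3*i+2 ∉ M → 3*i+2 ∉ M' := fun h hm => h (hsub' hm)
    rcases hxcase with rfl | rfl | rfl <;> tauto

def toF (k : ℕ) (M : Finset ℕ) : Fin k → Fin 3 :=
  fun i => if 3*(i:ℕ) ∉ M then 0 else if 3*(i:ℕ)+1 ∉ M then 1 else 2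

def ext3 (k : ℕ) (g : Fin k → Fin 3) : ℕ → ℕ :=
  fun i => if h : i < k then (g ⟨i, h⟩ : ℕ) else 0

def FF (k : ℕ) (g : Fin k → Fin 3) : Finset ℕ :=
  (Finset.range (3*k)).filter (fun a => a % 3 ≠ ext3 k g (a/3))

lemma FF_lt {k g a} (h : a ∈ FF k g) : a < 3*k := by
  simp [FF] at h; exact h.1

lemma mem_FF_block {k : ℕ} {g : Fin k → Fin 3} {i t : ℕ} (hi : i < k) (ht : t < 3) :
    (3*i + t ∈ FF k g ↔ t ≠ (g ⟨i, hi⟩ : ℕ)) := by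
  have h1 : (3*i+t) % 3 = t := by omega
  have h2 : (3*i+t) / 3 = i := by omega
  have h3 : 3*i+t < 3*k := by omega
  rw [FF, Finset.mem_filter, Finset.mem_range, h1, h2, ext3]
  simp [dif_pos hi]
  tauto

lemma good_block_mem {k : ℕ} {M : Finset ℕ} (hg : good k M) {i t : ℕ} (hi : i < k) (ht : t < 3) :
    (3*i + t ∈ M ↔ t ≠ (toF k M ⟨i, hi⟩ : ℕ)) := by
  have hD := hg.2 i hi
  rcases hD with ⟨ha, hb, hc⟩ | ⟨ha, hb, hc⟩ | ⟨ha, hb, hc⟩ <;>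
    interval_cases t <;> simp_all [toF]

lemma good_FF (k : ℕ) (g : Fin k → Fin 3) : good k (FF k g) := by
  constructor
  · intro a ha; simpa using FF_lt ha
  · intro i hi
    have m0 := mem_FF_block (g := g) hi (show (0:ℕ) < 3 by norm_num)
    have m1 := mem_FF_block (g := g) hi (show (1:ℕ) < 3 by norm_num)
    have m2 := mem_FF_block (g := g) hi (show (2:ℕ) < 3 by norm_num)
    simp only [Nat.add_zero] at m0
    have hj : (g ⟨i, hi⟩ : ℕ) < 3 := (g ⟨i, hi⟩).isLt
    have hj3 : (g ⟨i, hi⟩ : ℕ) = 0 ∨ (g ⟨i, hi⟩ : ℕ) = 1 ∨ (g ⟨i, hi⟩ : ℕ) = 2 := by omega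
    rcases hj3 with h | h | h <;> rw [h] at m0 m1 m2 <;> simp at m0 m1 m2 <;> tauto

lemma FF_toF {k : ℕ} {M : Finset ℕ} (hg : good k M) : FF k (toF k M) = M := by
  ext a
  by_cases ha : a < 3*k
  · have hsplit : 3*(a/3) + a%3 = a := by omega
    have hi : a/3 < k := by omega
    rw [← hsplit, mem_FF_block hi (by omega), good_block_mem hg hi (by omega)]
  · constructor
    · intro h; exact absurd (FF_lt h) ha
    · intro h; exact absurd (by simpa using hg.1 h) ha

lemma toF_FF {k : ℕ} (g : Fin k → Fin 3) : toF k (FF k g) = g := by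
  funext i
  have hi : (i:ℕ) < k := i.isLt
  have m0 := mem_FF_block (g := g) hi (show (0:ℕ) < 3 by norm_num)
  have m1 := mem_FF_block (g := g) hi (show (1:ℕ) < 3 by norm_num)
  simp only [Nat.add_zero] at m0
  have : (⟨(i:ℕ), hi⟩ : Fin k) = i := rfl
  rw [this] at m0 m1
  have hj : (g i : ℕ) < 3 := (g i).isLt
  apply Fin.ext
  have hj3 : (g i : ℕ) = 0 ∨ (g i : ℕ) = 1 ∨ (g i : ℕ) = 2 := by omega
  rcases hj3 with h | h | h <;> rw [h] at m0 m1 <;> simp at m0 m1 <;>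
    simp [toF, m0, m1, h]


/-- For every `k ≥ 1` there is a 2-CNF theory with exactly `n = 3k` atoms having exactly
`3^k = 3^(n/3)` minimal models; hence the bound `3^(n/3)` is attained. -/
theorem two_cnf_bound_attained (k : ℕ) (hk : 0 < k) :
    ∃ T : CTheory,
      (∀ c ∈ T, Clause.ok c) ∧ (∀ c ∈ T, c.card ≤ 2) ∧
      (thAtoms T).card = 3 * k ∧
      ((thAtoms T).powerset.filter (fun M => isMinModel M T)).card = 3 ^ k := by
  refine ⟨Tk k, ?_, ?_, ?_, ?_⟩
  · intro c hc
    rw [mem_Tk] at hc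
    obtain ⟨i, _, rfl | rfl | rfl⟩ := hc <;>
      · intro a ⟨_, h2⟩; simp [cl2] at h2
  · intro c hc
    rw [mem_Tk] at hc
    obtain ⟨i, _, rfl | rfl | rfl⟩ := hc <;>
      · rw [cl2]
        exact le_trans (Finset.card_insert_le _ _) (by simp)
  · rw [thAtoms_Tk, Finset.card_range]
  · have hmem : ∀ M, (M ∈ (thAtoms (Tk k)).powerset.filter (fun M => isMinModel M (Tk k)))
        ↔ good k M := by
      intro M
      rw [Finset.mem_filter, Finset.mem_powerset, minmodel_iff, thAtoms_Tk]
      exact ⟨fun h => h.2, fun h => ⟨h.1, h⟩⟩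
    rw [Finset.card_bij' (fun M _ => toF k M) (fun g _ => FF k g)
      (fun M hM => Finset.mem_univ _)
      (fun g _ => (hmem _).mpr (good_FF k g))
      (fun M hM => FF_toF ((hmem M).mp hM))
      (fun g _ => toF_FF g)]
    simp
end
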